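/- Let n ≥ 8 be divisible by 4, and let G be the cubic bipartite graph with vertex set {x_i, y_i : i ∈ ℤ_n} and edges x_i y_{i-2}, x_i y_i, x_i y_{i+1} (indices mod n). Then the square G² is not 5-choosable; in fact there is a list assignment L with |L(v)| = 4 for every vertex, where each list is of the form {1,...,5}∖{i}, admitting no proper L-coloring of G². -/

import Mathlib

open SimpleGraph

/-- The square of a graph: vertices at distance at most 2 are adjacent. -/
def square {V : Type*} (G : SimpleGraph V) : SimpleGraph V where
  Adj u v := u ≠ v ∧ (G.Adj u v ∨ ∃ w, G.Adj u w ∧ G.Adj w v)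
  symm := by
    refine ⟨?_⟩
    rintro u v ⟨h, h2 | ⟨w, hw1, hw2⟩⟩
    · exact ⟨h.symm, Or.inl h2.symm⟩
    · exact ⟨h.symm, Or.inr ⟨w, hw2.symm, hw1.symm⟩⟩
  loopless := ⟨fun u h => h.1 rfl⟩

/-- The cubic bipartite graph on `{x_i} ⊕ {y_i}`, `i ∈ ZMod n`, with edges
`x_i y_{i-2}`, `x_i y_i`, `x_i y_{i+1}`. -/
def cubicGraphA (n : ℕ) : SimpleGraph (ZMod n ⊕ ZMod n) where
  Adj a b := match a, b with
    | .inl i, .inr j => j = i - 2 ∨ j = i ∨ j = i + 1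
    | .inr j, .inl i => j = i - 2 ∨ j = i ∨ j = i + 1
    | _, _ => False
  symm := by
    refine ⟨?_⟩
    rintro (i | i) (j | j) h
    · exact h.elim
    · exact h
    · exact h
    · exact h.elim
  loopless := by refine ⟨?_⟩; rintro (i | i) h <;> exact h

/-- The explicit list assignment: `x_i` gets `{2,3,4,5}`; `y_i` gets `{1,2,4,5}`
for `n - 3 ≤ i ≤ n` (representatives in `{1,…,n}`) and `{1,3,4,5}` otherwise. -/
def listsA (n : ℕ) : ZMod n ⊕ ZMod n → Finset ℕ := fun v =>
  match v with
  | .inl _ => {2, 3, 4, 5}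
  | .inr i => if n - 3 ≤ i.val ∨ i.val = 0 then {1, 2, 4, 5} else {1, 3, 4, 5}

set_option maxHeartbeats 2000000 in
lemma auxA (n : ℕ) (hn : 8 ≤ n) (h4 : 4 ∣ n) (c : ZMod n ⊕ ZMod n → ℕ)
    (hc : ∀ v, c v ∈ listsA n v)
    (hadj : ∀ ⦃u v⦄, (square (cubicGraphA n)).Adj u v → c u ≠ c v) : False := by
  haveI : NeZero n := ⟨by omega⟩
  set E : ℕ → ZMod n := fun k => ((n - 7 + k : ℕ) : ZMod n) with hEdef
  have hEadd : ∀ k d : ℕ, E (k + d) = E k + (d : ZMod n) := by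
    intro k d
    simp only [hEdef, ← Nat.add_assoc, Nat.cast_add]
    ring
  have hdne : ∀ d : ℕ, 1 ≤ d → d ≤ 6 → ((d : ℕ) : ZMod n) ≠ 0 := by
    intro d h1 h6 h0
    have hv := ZMod.val_cast_of_lt (n := n) (a := d) (by omega)
    rw [h0, ZMod.val_zero] at hv
    omega
  have hEne : ∀ k d : ℕ, 1 ≤ d → d ≤ 6 → E k ≠ E (k + d) := by
    intro k d h1 h6 h
    rw [hEadd] at h
    exact hdne d h1 h6 (by linear_combination -h)
  -- adjacency in the square between x's
  have hsq_xx : ∀ (k d : ℕ), 1 ≤ d → d ≤ 3 →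
      (square (cubicGraphA n)).Adj (.inl (E k)) (.inl (E (k + d))) := by
    intro k d h1 h3
    refine ⟨by simpa using hEne k d h1 (by omega), Or.inr ?_⟩
    rw [hEadd]
    interval_cases d
    · exact ⟨.inr (E k + 1), Or.inr (Or.inr (by ring)),
        Or.inr (Or.inl (by ring))⟩
    · exact ⟨.inr (E k), Or.inr (Or.inl rfl), Or.inl (by ring)⟩
    · exact ⟨.inr (E k + 1), Or.inr (Or.inr (by ring)),
        Or.inl (by ring)⟩
  -- adjacency in the square between y's
  have hsq_yy : ∀ (k d : ℕ), 1 ≤ d → d ≤ 3 →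
      (square (cubicGraphA n)).Adj (.inr (E k)) (.inr (E (k + d))) := by
    intro k d h1 h3
    refine ⟨by simpa using hEne k d h1 (by omega), Or.inr ?_⟩
    rw [hEadd]
    interval_cases d
    · exact ⟨.inl (E k), Or.inr (Or.inl rfl), Or.inr (Or.inr (by ring))⟩
    · exact ⟨.inl (E k + 2), Or.inl (by ring), Or.inr (Or.inl (by ring))⟩
    · exact ⟨.inl (E k + 2), Or.inl (by ring), Or.inr (Or.inr (by ring))⟩
  -- adjacency x-y (direct edges)
  have hsq_xy : ∀ (i j : ZMod n), (j = i - 2 ∨ j = i ∨ j = i + 1) →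
      (square (cubicGraphA n)).Adj (.inl i) (.inr j) := by
    intro i j h
    exact ⟨by simp, Or.inl h⟩
  set XX : ℕ → ℕ := fun k => c (.inl (E k)) with hXXdef
  set YY : ℕ → ℕ := fun k => c (.inr (E k)) with hYYdef
  have hx_mem : ∀ k, XX k = 2 ∨ XX k = 3 ∨ XX k = 4 ∨ XX k = 5 := by
    intro k
    have h := hc (.inl (E k))
    simp only [listsA, Finset.mem_insert, Finset.mem_singleton] at h
    exact h
  have hy_mem5 : ∀ k, YY k = 1 ∨ YY k = 2 ∨ YY k = 3 ∨ YY k = 4 ∨ YY k = 5 := by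
    intro k
    have h := hc (.inr (E k))
    simp only [listsA] at h
    split at h <;> simp only [Finset.mem_insert, Finset.mem_singleton] at h <;> tauto
  have hx_ne : ∀ k d : ℕ, 1 ≤ d → d ≤ 3 → XX k ≠ XX (k + d) := by
    intro k d h1 h3
    exact hadj (hsq_xx k d h1 h3)
  have hy_ne : ∀ k d : ℕ, 1 ≤ d → d ≤ 3 → YY k ≠ YY (k + d) := by
    intro k d h1 h3
    exact hadj (hsq_yy k d h1 h3)
  -- periodicity of x colors
  have hper : ∀ k, XX (k + 4) = XX k := by
    intro k
    have m0 := hx_mem k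
    have m4 := hx_mem (k + 4)
    have e1 : k + 1 + 3 = k + 4 := by omega
    have e2 : k + 2 + 2 = k + 4 := by omega
    have e3 : k + 3 + 1 = k + 4 := by omega
    have n1 := hx_ne k 1 (by omega) (by omega)
    have n2 := hx_ne k 2 (by omega) (by omega)
    have n3 := hx_ne k 3 (by omega) (by omega)
    have n4 := hx_ne (k+1) 3 (by omega) (by omega); rw [e1] at n4
    have n5 := hx_ne (k+2) 2 (by omega) (by omega); rw [e2] at n5
    have n6 := hx_ne (k+3) 1 (by omega) (by omega); rw [e3] at n6
    have n7 := hx_ne (k+1) 1 (by omega) (by omega)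
    have n8 := hx_ne (k+1) 2 (by omega) (by omega)
    have n9 := hx_ne (k+2) 1 (by omega) (by omega)
    have e4 : k + 1 + 1 = k + 2 := by omega
    have e5 : k + 1 + 2 = k + 3 := by omega
    have e6 : k + 2 + 1 = k + 3 := by omega
    rw [e4] at n7; rw [e5] at n8; rw [e6] at n9
    have m1 := hx_mem (k+1)
    have m2 := hx_mem (k+2)
    have m3 := hx_mem (k+3)
    omega
  -- each y is forced to 1 or the x-color one step ahead
  have hy_forced : ∀ k : ℕ, YY (k + 1) = 1 ∨ YY (k + 1) = XX (k + 2) := by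
    intro k
    have a1 : c (.inl (E k)) ≠ c (.inr (E (k + 1))) := by
      refine hadj (hsq_xy (E k) (E (k+1)) (Or.inr (Or.inr ?_)))
      rw [hEadd]; push_cast; ring
    have a2 : c (.inl (E (k+1))) ≠ c (.inr (E (k + 1))) :=
      hadj (hsq_xy (E (k+1)) (E (k+1)) (Or.inr (Or.inl rfl)))
    have a3 : c (.inl (E (k+3))) ≠ c (.inr (E (k + 1))) := by
      refine hadj (hsq_xy (E (k+3)) (E (k+1)) (Or.inl ?_))
      have : E (k+3) = E (k+1) + ((2:ℕ) : ZMod n) := by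
        rw [show k + 3 = (k+1) + 2 from by omega, hEadd]
      rw [this]; push_cast; ring
    have b1 : XX k ≠ YY (k+1) := a1
    have b2 : XX (k+1) ≠ YY (k+1) := a2
    have b3 : XX (k+3) ≠ YY (k+1) := a3
    have n1 := hx_ne k 1 (by omega) (by omega)
    have n2 := hx_ne k 2 (by omega) (by omega)
    have n3 := hx_ne k 3 (by omega) (by omega)
    have n7 := hx_ne (k+1) 1 (by omega) (by omega)
    have n8 := hx_ne (k+1) 2 (by omega) (by omega)
    have n9 := hx_ne (k+2) 1 (by omega) (by omega)
    have e4 : k + 1 + 1 = k + 2 := by omega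
    have e5 : k + 1 + 2 = k + 3 := by omega
    have e6 : k + 2 + 1 = k + 3 := by omega
    rw [e4] at n7; rw [e5] at n8; rw [e6] at n9
    have m0 := hx_mem k
    have m1 := hx_mem (k+1)
    have m2 := hx_mem (k+2)
    have m3 := hx_mem (k+3)
    have my := hy_mem5 (k+1)
    omega
  -- list membership for special / normal y's
  have hval : ∀ k : ℕ, k ≤ 6 → (E k).val = n - 7 + k := by
    intro k hk
    exact ZMod.val_cast_of_lt (by omega)
  have hE7 : ∀ r : ℕ, E (7 + r) = ((r : ℕ) : ZMod n) := by
    intro r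
    simp only [hEdef]
    rw [show n - 7 + (7 + r) = n + r from by omega]
    push_cast
    simp [ZMod.natCast_self]
  have hy_spec : ∀ k, 4 ≤ k → k ≤ 7 → YY k = 1 ∨ YY k = 2 ∨ YY k = 4 ∨ YY k = 5 := by
    intro k h4' h7
    have h := hc (.inr (E k))
    simp only [listsA] at h
    rw [if_pos] at h
    · simp only [Finset.mem_insert, Finset.mem_singleton] at h; tauto
    · rcases Nat.lt_or_ge k 7 with hk | hk
      · left; rw [hval k (by omega)]; omega
      · right
        rw [show k = 7 + 0 from by omega, hE7 0]
        simp
  have hy_norm : ∀ k, (k ≤ 3 ∨ (8 ≤ k ∧ k ≤ 11)) → YY k = 1 ∨ YY k = 3 ∨ YY k = 4 ∨ YY k = 5 := by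
    intro k hk
    have h := hc (.inr (E k))
    simp only [listsA] at h
    rw [if_neg] at h
    · simp only [Finset.mem_insert, Finset.mem_singleton] at h; tauto
    · rcases hk with hk | ⟨hk8, hk11⟩
      · rw [hval k (by omega)]; omega
      · rw [show k = 7 + (k - 7) from by omega, hE7 (k - 7),
          ZMod.val_cast_of_lt (show k - 7 < n by omega)]
        omega
  -- the key contradiction
  have key : ∀ p q : ℕ, 4 ≤ p → p ≤ 7 → 4 ≤ q → q ≤ 7 →
      XX (p + 1) = 2 → XX (q + 1) = 3 → False := by
    intro p q hp4 hp7 hq4 hq7 h2 h3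
    have hYq : YY q = 1 := by
      have h1 := hy_forced (q - 1)
      rw [show q - 1 + 1 = q from by omega, show q - 1 + 2 = q + 1 from by omega] at h1
      have hm := hy_spec q hq4 hq7
      omega
    have hpq : p ≠ q := by intro h; rw [h] at h2; omega
    rcases Nat.lt_or_ge p q with h | h
    · -- p < q; j = p + 4 is a normal vertex forced to 1, adjacent to y_q
      have hYj : YY (p + 4) = 1 := by
        have h1 := hy_forced (p + 3)
        rw [show p + 3 + 1 = p + 4 from by omega, show p + 3 + 2 = p + 1 + 4 from by omega,
          hper (p + 1)] at h1
        have hm := hy_norm (p + 4) (Or.inr ⟨by omega, by omega⟩)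
        omega
      have hadj' := hy_ne q (p + 4 - q) (by omega) (by omega)
      rw [show q + (p + 4 - q) = p + 4 from by omega] at hadj'
      rw [hYq, hYj] at hadj'
      exact hadj' rfl
    · have hlt : q < p := by omega
      -- j = p - 4 is a normal vertex forced to 1, adjacent to y_q
      have hYj : YY (p - 4) = 1 := by
        have h1 := hy_forced (p - 5)
        rw [show p - 5 + 1 = p - 4 from by omega, show p - 5 + 2 = p - 3 from by omega] at h1
        have hp' : XX (p - 3) = 2 := by
          have := hper (p - 3)
          rw [show p - 3 + 4 = p + 1 from by omega] at this
          omega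
        have hm := hy_norm (p - 4) (Or.inl (by omega))
        omega
      have hadj' := hy_ne (p - 4) (q + 4 - p) (by omega) (by omega)
      rw [show p - 4 + (q + 4 - p) = q from by omega] at hadj'
      rw [hYq, hYj] at hadj'
      exact hadj' rfl
  -- finally, among XX 5, XX 6, XX 7, XX 8 both colors 2 and 3 occur
  have m5 := hx_mem 5
  have m6 := hx_mem 6
  have m7 := hx_mem 7
  have m8 := hx_mem 8
  have n56 := hx_ne 5 1 (by omega) (by omega)
  have n57 := hx_ne 5 2 (by omega) (by omega)
  have n58 := hx_ne 5 3 (by omega) (by omega)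
  have n67 := hx_ne 6 1 (by omega) (by omega)
  have n68 := hx_ne 6 2 (by omega) (by omega)
  have n78 := hx_ne 7 1 (by omega) (by omega)
  norm_num at n56 n57 n58 n67 n68 n78
  have h2 : ∃ p, 4 ≤ p ∧ p ≤ 7 ∧ XX (p + 1) = 2 := by
    have : XX 5 = 2 ∨ XX 6 = 2 ∨ XX 7 = 2 ∨ XX 8 = 2 := by omega
    rcases this with h | h | h | h
    exacts [⟨4, by omega, by omega, h⟩, ⟨5, by omega, by omega, h⟩,
      ⟨6, by omega, by omega, h⟩, ⟨7, by omega, by omega, h⟩]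
  have h3 : ∃ q, 4 ≤ q ∧ q ≤ 7 ∧ XX (q + 1) = 3 := by
    have : XX 5 = 3 ∨ XX 6 = 3 ∨ XX 7 = 3 ∨ XX 8 = 3 := by omega
    rcases this with h | h | h | h
    exacts [⟨4, by omega, by omega, h⟩, ⟨5, by omega, by omega, h⟩,
      ⟨6, by omega, by omega, h⟩, ⟨7, by omega, by omega, h⟩]
  obtain ⟨p, hp4, hp7, hp⟩ := h2
  obtain ⟨q, hq4, hq7, hq⟩ := h3
  exact key p q hp4 hp7 hq4 hq7 hp hq

/-- For `n ≥ 8` divisible by `4`, the square of the graph admits lists of size 4,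
each of the form `{1,…,5} \ {i}`, from which no proper coloring exists. -/
theorem stmt2 (n : ℕ) (hn : 8 ≤ n) (h4 : 4 ∣ n) :
    (∀ v, (listsA n v).card = 4) ∧
    ¬ ∃ c : ZMod n ⊕ ZMod n → ℕ, (∀ v, c v ∈ listsA n v) ∧
      ∀ ⦃u v⦄, (square (cubicGraphA n)).Adj u v → c u ≠ c v := by
  constructor
  · rintro (i | i) <;> simp only [listsA]
    · decide
    · split <;> decide
  · rintro ⟨c, hc, hadj⟩
    exact auxA n hn h4 c hc hadj
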